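/- arXiv:2403.05462 — 2 statements merged into one kernel-verified Lean document; each statement's English description precedes it below -/
import Mathlib

section
/- The function $\hat v_1(r,\theta) = c_1 r^{-1/2}\log r\,\sin(\theta/2) + c_2 r^{-1/2}\sin(5\theta/2)$ with $c_1 = -\frac{1}{64}\phi^{(iv)}(0)K^3$ and $c_2 = -\frac{1}{384}\phi^{(iv)}(0)K^3$ satisfies, for all $r>0$ and $\theta\in(-\pi,\pi)$, the equation $-\partial_r^2 \hat v_1 - \frac{1}{r}\partial_r \hat v_1 - \frac{1}{r^2}\partial_\theta^2 \hat v_1 = -\frac{1}{64}\phi^{(iv)}(0) K^3 r^{-5/2}(\sin(\theta/2) + \sin(5\theta/2))$, together with the Neumann conditions $\partial_\theta \hat v_1(r,\pm\pi) = 0$. -/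
open Real

/-- The corrector profile `v̂₁(r,θ) = c₁ r^{-1/2} log r sin(θ/2) + c₂ r^{-1/2} sin(5θ/2)`. -/
noncomputable def vhat1 (c1 c2 r θ : ℝ) : ℝ :=
  c1 * r ^ (-(1 : ℝ) / 2) * Real.log r * Real.sin (θ / 2)
    + c2 * r ^ (-(1 : ℝ) / 2) * Real.sin (5 * θ / 2)

/-- derivative of `A (x^a log x) + B x^a`. -/
lemma key_hasDerivAt (a A B r : ℝ) (hr : 0 < r) :
    HasDerivAt (fun x : ℝ => A * (x ^ a * Real.log x) + B * x ^ a)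
      ((A * a) * (r ^ (a - 1) * Real.log r) + (A + B * a) * r ^ (a - 1)) r := by
  have h1 : HasDerivAt (fun x : ℝ => x ^ a) (a * r ^ (a - 1)) r :=
    Real.hasDerivAt_rpow_const (Or.inl hr.ne')
  have h2 : HasDerivAt Real.log r⁻¹ r := Real.hasDerivAt_log hr.ne'
  have hmul := h1.mul h2
  have h3 : HasDerivAt (fun x : ℝ => A * (x ^ a * Real.log x) + B * x ^ a)
      (A * (a * r ^ (a - 1) * Real.log r + r ^ a * r⁻¹) + B * (a * r ^ (a - 1))) r :=
    (hmul.const_mul A).add (h1.const_mul B)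
  have hx : r ^ a * r⁻¹ = r ^ (a - 1) := by
    rw [← Real.rpow_neg_one r, ← Real.rpow_add hr, sub_eq_add_neg]
  rw [hx] at h3
  convert h3 using 1
  ring

lemma hasDerivAt_theta (A B θ : ℝ) :
    HasDerivAt (fun θ' => A * Real.sin (θ' / 2) + B * Real.sin (5 * θ' / 2))
      (A * (Real.cos (θ / 2) * (1 / 2)) + B * (Real.cos (5 * θ / 2) * (5 / 2))) θ := by
  have h1 : HasDerivAt (fun θ' : ℝ => θ' / 2) (1 / 2) θ := by
    simpa using (hasDerivAt_id θ).div_const 2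
  have h2 : HasDerivAt (fun θ' : ℝ => 5 * θ' / 2) (5 / 2) θ := by
    simpa using ((hasDerivAt_id θ).const_mul 5).div_const 2
  have s1 : HasDerivAt (fun θ' : ℝ => Real.sin (θ' / 2)) (Real.cos (θ / 2) * (1 / 2)) θ :=
    by have := (Real.hasDerivAt_sin (θ / 2)).comp θ h1; exact this
  have s2 : HasDerivAt (fun θ' : ℝ => Real.sin (5 * θ' / 2)) (Real.cos (5 * θ / 2) * (5 / 2)) θ :=
    by have := (Real.hasDerivAt_sin (5 * θ / 2)).comp θ h2; exact this
  exact (s1.const_mul A).add (s2.const_mul B)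

lemma hasDerivAt_theta2 (A B θ : ℝ) :
    HasDerivAt (fun θ' => A * (Real.cos (θ' / 2) * (1 / 2)) + B * (Real.cos (5 * θ' / 2) * (5 / 2)))
      (A * (-Real.sin (θ / 2) * (1 / 2) * (1 / 2)) + B * (-Real.sin (5 * θ / 2) * (1 / 2) * (25 / 2))) θ := by
  have h1 : HasDerivAt (fun θ' : ℝ => θ' / 2) (1 / 2) θ := by
    simpa using (hasDerivAt_id θ).div_const 2
  have h2 : HasDerivAt (fun θ' : ℝ => 5 * θ' / 2) (5 / 2) θ := by
    simpa using ((hasDerivAt_id θ).const_mul 5).div_const 2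
  have c1' : HasDerivAt (fun θ' : ℝ => Real.cos (θ' / 2)) (-Real.sin (θ / 2) * (1 / 2)) θ :=
    by have := (Real.hasDerivAt_cos (θ / 2)).comp θ h1; exact this
  have c2' : HasDerivAt (fun θ' : ℝ => Real.cos (5 * θ' / 2)) (-Real.sin (5 * θ / 2) * (5 / 2)) θ :=
    by have := (Real.hasDerivAt_cos (5 * θ / 2)).comp θ h2; exact this
  have : HasDerivAt (fun θ' => A * (Real.cos (θ' / 2) * (1 / 2)) + B * (Real.cos (5 * θ' / 2) * (5 / 2)))
      (A * (-Real.sin (θ / 2) * (1 / 2) * (1 / 2)) + B * (-Real.sin (5 * θ / 2) * (5 / 2) * (5 / 2))) θ :=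
    ((c1'.mul_const (1 / 2)).const_mul A).add ((c2'.mul_const (5 / 2)).const_mul B)
  convert this using 1
  ring

/-- The `r`-slice of `vhat1` as function of `θ`. -/
lemma vhat1_theta_eq (c1 c2 r : ℝ) :
    (fun θ' => vhat1 c1 c2 r θ') =
      fun θ' => (c1 * r ^ (-(1 : ℝ) / 2) * Real.log r) * Real.sin (θ' / 2)
        + (c2 * r ^ (-(1 : ℝ) / 2)) * Real.sin (5 * θ' / 2) := by
  funext θ'
  simp [vhat1]

lemma deriv_theta (c1 c2 r : ℝ) :
    deriv (fun θ' => vhat1 c1 c2 r θ') =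
      fun θ => (c1 * r ^ (-(1 : ℝ) / 2) * Real.log r) * (Real.cos (θ / 2) * (1 / 2))
        + (c2 * r ^ (-(1 : ℝ) / 2)) * (Real.cos (5 * θ / 2) * (5 / 2)) := by
  funext θ
  rw [vhat1_theta_eq]
  exact (hasDerivAt_theta _ _ θ).deriv

/-- The `θ`-slice of `vhat1` as function of `r`. -/
lemma vhat1_r_eq (c1 c2 θ : ℝ) :
    (fun r' => vhat1 c1 c2 r' θ) =
      fun x => (c1 * Real.sin (θ / 2)) * (x ^ (-(1 : ℝ) / 2) * Real.log x)
        + (c2 * Real.sin (5 * θ / 2)) * x ^ (-(1 : ℝ) / 2) := by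
  funext x
  simp [vhat1]; ring

lemma hasDerivAt_r (c1 c2 θ r : ℝ) (hr : 0 < r) :
    HasDerivAt (fun r' => vhat1 c1 c2 r' θ)
      ((c1 * Real.sin (θ / 2) * (-(1 : ℝ) / 2)) * (r ^ (-(3 : ℝ) / 2) * Real.log r)
        + (c1 * Real.sin (θ / 2) + c2 * Real.sin (5 * θ / 2) * (-(1 : ℝ) / 2)) * r ^ (-(3 : ℝ) / 2)) r := by
  rw [vhat1_r_eq]
  have := key_hasDerivAt (-(1 : ℝ) / 2) (c1 * Real.sin (θ / 2)) (c2 * Real.sin (5 * θ / 2)) r hr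
  convert this using 2 <;> norm_num

lemma deriv_r_eventually (c1 c2 θ r : ℝ) (hr : 0 < r) :
    deriv (fun r' => vhat1 c1 c2 r' θ) =ᶠ[nhds r]
      fun x => (c1 * Real.sin (θ / 2) * (-(1 : ℝ) / 2)) * (x ^ (-(3 : ℝ) / 2) * Real.log x)
        + (c1 * Real.sin (θ / 2) + c2 * Real.sin (5 * θ / 2) * (-(1 : ℝ) / 2)) * x ^ (-(3 : ℝ) / 2) := by
  filter_upwards [Ioi_mem_nhds hr] with x hx
  exact (hasDerivAt_r c1 c2 θ x hx).deriv

theorem vhat1_solves_corrector_PDE (K φ4 : ℝ) (hK : 0 ≤ K) (c1 c2 : ℝ)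
    (hc1 : c1 = -(1 / 64) * φ4 * K ^ 3) (hc2 : c2 = -(1 / 384) * φ4 * K ^ 3) :
    (∀ r θ : ℝ, 0 < r → θ ∈ Set.Ioo (-π) π →
      -(deriv (deriv (fun r' => vhat1 c1 c2 r' θ)) r)
        - (1 / r) * deriv (fun r' => vhat1 c1 c2 r' θ) r
        - (1 / r ^ 2) * deriv (deriv (fun θ' => vhat1 c1 c2 r θ')) θ
      = -(1 / 64) * φ4 * K ^ 3 * r ^ (-(5 : ℝ) / 2)
          * (Real.sin (θ / 2) + Real.sin (5 * θ / 2))) ∧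
    (∀ r : ℝ, 0 < r →
      deriv (fun θ' => vhat1 c1 c2 r θ') π = 0 ∧
      deriv (fun θ' => vhat1 c1 c2 r θ') (-π) = 0) := by
  constructor
  · intro r θ hr _
    set s1 := Real.sin (θ / 2)
    set s5 := Real.sin (5 * θ / 2)
    set L := Real.log r
    -- first r-derivative
    have hd1 : deriv (fun r' => vhat1 c1 c2 r' θ) r =
        (c1 * s1 * (-(1 : ℝ) / 2)) * (r ^ (-(3 : ℝ) / 2) * L)
          + (c1 * s1 + c2 * s5 * (-(1 : ℝ) / 2)) * r ^ (-(3 : ℝ) / 2) :=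
      (hasDerivAt_r c1 c2 θ r hr).deriv
    -- second r-derivative
    have hd2 : deriv (deriv (fun r' => vhat1 c1 c2 r' θ)) r =
        ((c1 * s1 * (-(1 : ℝ) / 2)) * (-(3 : ℝ) / 2)) * (r ^ (-(5 : ℝ) / 2) * L)
          + ((c1 * s1 * (-(1 : ℝ) / 2)) + (c1 * s1 + c2 * s5 * (-(1 : ℝ) / 2)) * (-(3 : ℝ) / 2))
              * r ^ (-(5 : ℝ) / 2) := by
      rw [(deriv_r_eventually c1 c2 θ r hr).deriv_eq]
      have := key_hasDerivAt (-(3 : ℝ) / 2) (c1 * s1 * (-(1 : ℝ) / 2))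
        (c1 * s1 + c2 * s5 * (-(1 : ℝ) / 2)) r hr
      have h := this.deriv
      convert h using 2 <;> norm_num [L]
    -- second θ-derivative
    have hdθ : deriv (deriv (fun θ' => vhat1 c1 c2 r θ')) θ =
        (c1 * r ^ (-(1 : ℝ) / 2) * L) * (-s1 * (1 / 2) * (1 / 2))
          + (c2 * r ^ (-(1 : ℝ) / 2)) * (-s5 * (1 / 2) * (25 / 2)) := by
      rw [deriv_theta]
      exact (hasDerivAt_theta2 _ _ θ).deriv
    rw [hd1, hd2, hdθ]
    -- power identities
    have h3 : r ^ (-(3 : ℝ) / 2) = r ^ (-(5 : ℝ) / 2) * r := by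
      nth_rewrite 1 [show (-(3:ℝ)/2) = (-(5:ℝ)/2) + 1 by norm_num]
      rw [Real.rpow_add hr, Real.rpow_one]
    have h1 : r ^ (-(1 : ℝ) / 2) = r ^ (-(5 : ℝ) / 2) * r * r := by
      nth_rewrite 1 [show (-(1:ℝ)/2) = (-(3:ℝ)/2) + 1 by norm_num]
      rw [Real.rpow_add hr, Real.rpow_one, h3]
    rw [h3, h1, hc1, hc2]
    field_simp
    ring
  · intro r hr
    have hpi2 : Real.cos (π / 2) = 0 := Real.cos_pi_div_two
    have h5pi2 : Real.cos (5 * π / 2) = 0 := by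
      rw [show (5 * π / 2 : ℝ) = π / 2 + 2 * π by ring, Real.cos_add_two_pi, hpi2]
    constructor
    · rw [deriv_theta]
      simp [hpi2, h5pi2]
    · rw [deriv_theta]
      have ha : Real.cos (-π / 2) = 0 := by
        rw [show (-π / 2 : ℝ) = -(π / 2) by ring, Real.cos_neg]; exact hpi2
      have hb : Real.cos (5 * -π / 2) = 0 := by
        rw [show (5 * -π / 2 : ℝ) = -(5 * π / 2) by ring, Real.cos_neg]; exact h5pi2
      have hb' : Real.cos (-(5 * π) / 2) = 0 := by
        rw [show (-(5 * π) / 2 : ℝ) = -(5 * π / 2) by ring, Real.cos_neg]; exact h5pi2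
      simp [ha, hb, hb']
end

section
/- Let $u, v, \eta: \Lambda \to \mathbb{R}$ with $\eta$ finitely supported, where $\Lambda = \mathbb{Z}^2 - (1/2,1/2)$ and $D$ is the discrete gradient with stencils $\mathcal{R}(m)$ (bonds crossing the crack removed). Then $\sum_{m\in\Lambda} Du(m)\cdot D[v\eta](m) = \sum_{m\in\Lambda} D[u\eta](m)\cdot Dv(m) + \sum_{m\in\Lambda}\big( v(m)(D\eta(m)\cdot Du(m)) - u(m)(D\eta(m)\cdot Dv(m))\big)$. -/
/-! The cracked square lattice `Λ = ℤ² - (1/2,1/2)` is indexed by `ℤ × ℤ`, with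
lattice site `m` placed at `(m₁ - 1/2, m₂ - 1/2)`.  The crack is
`Γ₀ = {(x₁,0) : x₁ ≤ 0}`; a vertical bond crosses it iff it joins the rows
`m₂ = 0, 1` (i.e. `x₂ = ∓1/2`) with `m₁ ≤ 0` (i.e. `x₁ < 0`). -/

/-- The nearest-neighbour interaction stencil `ℛ = {±e₁, ±e₂}`. -/
def Rfull : Finset (ℤ × ℤ) :=
  {((1 : ℤ), (0 : ℤ)), (-1, 0), (0, 1), (0, -1)}

/-- The bond from `m` in direction `ρ` crosses the crack `Γ₀`. -/
def crosses (m ρ : ℤ × ℤ) : Prop :=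
  m.1 ≤ 0 ∧ ((m.2 = 1 ∧ ρ = (0, -1)) ∨ (m.2 = 0 ∧ ρ = (0, 1)))

instance (m ρ : ℤ × ℤ) : Decidable (crosses m ρ) := by
  unfold crosses; infer_instance

/-- The cracked discrete gradient: `(Du(m))_ρ = u(m+ρ) - u(m)` if the bond does not
cross the crack, and `0` otherwise. -/
def Dg (u : ℤ × ℤ → ℝ) (m ρ : ℤ × ℤ) : ℝ :=
  if crosses m ρ then 0 else u (m + ρ) - u m

/-- The pointwise dot product `Du(m) · Dv(m) = ∑_{ρ∈ℛ} (Du(m))_ρ (Dv(m))_ρ`. -/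
def Ddot (u v : ℤ × ℤ → ℝ) (m : ℤ × ℤ) : ℝ :=
  ∑ ρ ∈ Rfull, Dg u m ρ * Dg v m ρ

/-- Discrete product rule. -/
lemma Dg_mul (a η : ℤ × ℤ → ℝ) (m ρ : ℤ × ℤ) :
    Dg (fun n => a n * η n) m ρ = Dg a m ρ * η (m + ρ) + a m * Dg η m ρ := by
  unfold Dg
  split <;> ring

/-- Pointwise identity. -/
lemma pointwise_id (u v η : ℤ × ℤ → ℝ) (m : ℤ × ℤ) :
    Ddot u (fun n => v n * η n) m
      = Ddot (fun n => u n * η n) v m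
        + (v m * Ddot η u m - u m * Ddot η v m) := by
  unfold Ddot
  rw [Finset.mul_sum, Finset.mul_sum, ← Finset.sum_sub_distrib, ← Finset.sum_add_distrib]
  refine Finset.sum_congr rfl fun ρ _ => ?_
  rw [Dg_mul, Dg_mul]
  ring

lemma summable_aux (η : ℤ × ℤ → ℝ) (hη : (Function.support η).Finite)
    (f : ℤ × ℤ → ℝ)
    (hf : ∀ m, η m = 0 → (∀ ρ ∈ Rfull, η (m + ρ) = 0) → f m = 0) :
    Summable f := by
  apply summable_of_finite_support
  have hfin : (⋃ ρ ∈ (insert ((0 : ℤ), (0 : ℤ)) Rfull : Finset (ℤ × ℤ)),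
      (fun m => m + ρ) ⁻¹' Function.support η).Finite := by
    apply Set.Finite.biUnion (Finset.finite_toSet _)
    intro ρ _
    exact hη.preimage (fun a _ b _ h => by simpa using h)
  refine hfin.subset fun m hm => ?_
  by_contra hnot
  simp only [Set.mem_iUnion, Set.mem_preimage, Function.mem_support, not_exists,
    not_not, Finset.mem_insert] at hnot
  apply hm
  exact hf m (by have := hnot (0,0) (Or.inl rfl); rwa [show m + ((0:ℤ),(0:ℤ)) = m from by ext <;> simp] at this) fun ρ hρ => hnot ρ (Or.inr hρ)

theorem pushing_cutoff (u v η : ℤ × ℤ → ℝ) (hη : (Function.support η).Finite) :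
    ∑' m : ℤ × ℤ, Ddot u (fun n => v n * η n) m
      = ∑' m : ℤ × ℤ, Ddot (fun n => u n * η n) v m
        + ∑' m : ℤ × ℤ, (v m * Ddot η u m - u m * Ddot η v m) := by
  have h1 : Summable fun m => Ddot (fun n => u n * η n) v m := by
    apply summable_aux η hη
    intro m h0 hr
    unfold Ddot
    refine Finset.sum_eq_zero fun ρ hρ => ?_
    have : Dg (fun n => u n * η n) m ρ = 0 := by
      unfold Dg
      split
      · rfl
      · show u (m + ρ) * η (m + ρ) - u m * η m = 0
        rw [h0, hr ρ hρ]; ring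
    rw [this, zero_mul]
  have h2 : Summable fun m => v m * Ddot η u m - u m * Ddot η v m := by
    apply summable_aux η hη
    intro m h0 hr
    have hz : ∀ w : ℤ × ℤ → ℝ, Ddot η w m = 0 := by
      intro w
      refine Finset.sum_eq_zero fun ρ hρ => ?_
      have : Dg η m ρ = 0 := by
        unfold Dg
        split
        · rfl
        · rw [h0, hr ρ hρ]; ring
      rw [this, zero_mul]
    rw [hz, hz]; ring
  rw [← Summable.tsum_add h1 h2]
  exact tsum_congr (pointwise_id u v η)
end
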